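/- Let k ≥ 0 be an integer, let n = 12k + 9 and s = n − 6. Then HOP(2^⟨s⟩, 4, 8) has a solution, i.e., HOP(2^⟨s⟩, 2m_1, 2m_2) has a solution with (m_1, m_2) = (2, 4). (In the paper this is stated as: 4K_n^• admits an HOP (C_2, C_4)-decomposition, which by the paper's Theorem 3.2 is equivalent to the stated HOP solution.) -/

import Mathlib

/-- The vertex set of the complete graph `K_{2n}`: the `n` couples are indexed by `Fin n`,
and the two members of a couple by `Fin 2`. -/
abbrev HOPVertex (n : ℕ) : Type := Fin n × Fin 2

/-- The spouse of a participant: the other member of the same couple. -/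
def HOPspouse {n : ℕ} (v : HOPVertex n) : HOPVertex n := (v.1, v.2 + 1)

/-- An edge of `K_{2n}` is an `I`-edge (an edge of the distinguished perfect matching `I`)
if it joins a participant to their spouse. -/
def IsIEdge {n : ℕ} (e : Sym2 (HOPVertex n)) : Prop :=
  ∃ v, e = s(v, HOPspouse v)

/-- An `I`-alternating `(K_2^⟨s⟩, C_{2m_1}, …, C_{2m_t})`-factor of `K_{2n}`:
a spanning subgraph of `K_{2n}` which is a vertex-disjoint union of `s` edges of `I`
(one for each `a : Fin s`, namely the edge joining `pair a` to its spouse) together with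
`t` cycles, the `i`-th of which has length `2 * m i` (given by the cyclic vertex sequence
`cyc i : ZMod (2 * m i) → HOPVertex n`), such that along each cycle the edges alternate
between `I`-edges (at even positions) and non-`I`-edges (at odd positions).
The field `spanning` says that the listed vertices are pairwise distinct and exhaust the
whole vertex set; in particular each `cyc i` is injective, so it really traces a cycle. -/
structure HOPFactor (n s t : ℕ) (m : Fin t → ℕ) : Type where
  pair : Fin s → HOPVertex n
  cyc : (i : Fin t) → ZMod (2 * m i) → HOPVertex n
  alt_even : ∀ (i : Fin t) (j : ZMod (2 * m i)),
      j.val % 2 = 0 → cyc i (j + 1) = HOPspouse (cyc i j)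
  alt_odd : ∀ (i : Fin t) (j : ZMod (2 * m i)),
      j.val % 2 = 1 → ¬ IsIEdge s(cyc i j, cyc i (j + 1))
  spanning : Function.Bijective
      (Sum.elim
        (fun a : Fin s × Fin 2 => if a.2 = 0 then pair a.1 else HOPspouse (pair a.1))
        (fun x : (i : Fin t) × ZMod (2 * m i) => cyc x.1 x.2))

/-- The edge set of an `I`-alternating `(K_2^⟨s⟩, C_{2m_1}, …, C_{2m_t})`-factor. -/
def HOPFactor.edges {n s t : ℕ} {m : Fin t → ℕ} (F : HOPFactor n s t m) :
    Set (Sym2 (HOPVertex n)) :=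
  {e | (∃ a : Fin s, e = s(F.pair a, HOPspouse (F.pair a))) ∨
    ∃ (i : Fin t) (j : ZMod (2 * m i)), e = s(F.cyc i j, F.cyc i (j + 1))}

/-- A solution to the generalized Honeymoon Oberwolfach Problem
`HOP(2^⟨s⟩, 2 m_1, …, 2 m_t)`: a family of `γ` `I`-alternating
`(K_2^⟨s⟩, C_{2m_1}, …, C_{2m_t})`-factors of `K_{2n}`, where `γ` is the natural number
with `γ * (m_1 + ⋯ + m_t) = 2n(n-1)`, such that every edge of `K_{2n}` that is not an
`I`-edge lies in exactly one factor of the family. -/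
def HOPSolution (n s t : ℕ) (m : Fin t → ℕ) : Prop :=
  ∃ γ : ℕ, γ * (∑ i, m i) = 2 * n * (n - 1) ∧
    ∃ F : Fin γ → HOPFactor n s t m,
      ∀ e : Sym2 (HOPVertex n), ¬ e.IsDiag → ¬ IsIEdge e →
        ∃! k : Fin γ, e ∈ (F k).edges



namespace HOP62

lemma fin2_add11 : ∀ x : Fin 2, x + 1 + 1 = x := by decide

lemma fin2_ne_add1 : ∀ x : Fin 2, x ≠ x + 1 := by decide

lemma fin2_add1_ne : ∀ x : Fin 2, x + 1 ≠ x := by decide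

lemma fin2_eq_or : ∀ x y : Fin 2, y = x ∨ y = x + 1 := by decide

lemma not_isIEdge_of_fst_ne {n : ℕ} {p q : HOPVertex n} (h : p.1 ≠ q.1) :
    ¬ IsIEdge s(p, q) := by
  rintro ⟨v, hv⟩
  rw [Sym2.eq_iff] at hv
  rcases hv with ⟨h1, h2⟩ | ⟨h1, h2⟩ <;> subst h1 <;> subst h2 <;> exact h rfl

variable {k : ℕ}

instance instNZ (k : ℕ) : NeZero (12 * k + 9) := ⟨by omega⟩

def tf (k : ℕ) : ZMod (12 * k + 9) ≃ Fin (12 * k + 9) where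
  toFun z := ⟨z.val, z.val_lt⟩
  invFun i := ((i : ℕ) : ZMod (12 * k + 9))
  left_inv z := ZMod.natCast_zmod_val z
  right_inv i := by
    ext
    simp [ZMod.val_natCast, Nat.mod_eq_of_lt i.isLt]

structure Blk (k : ℕ) where
  A : ZMod (12 * k + 9)
  B : ZMod (12 * k + 9)
  c0 : ZMod (12 * k + 9)
  c1 : ZMod (12 * k + 9)
  c2 : ZMod (12 * k + 9)
  c3 : ZMod (12 * k + 9)
  t : Fin 2
  x0 : Fin 2
  x1 : Fin 2
  x2 : Fin 2
  x3 : Fin 2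
  hAB : A ≠ B
  hA0 : A ≠ c0
  hA1 : A ≠ c1
  hA2 : A ≠ c2
  hA3 : A ≠ c3
  hB0 : B ≠ c0
  hB1 : B ≠ c1
  hB2 : B ≠ c2
  hB3 : B ≠ c3
  h01 : c0 ≠ c1
  h02 : c0 ≠ c2
  h03 : c0 ≠ c3
  h12 : c1 ≠ c2
  h13 : c1 ≠ c3
  h23 : c2 ≠ c3

def Blk.cyc4 (β : Blk k) : ZMod 4 → HOPVertex (12 * k + 9) :=
  ![(tf k β.A, 0), (tf k β.A, 1), (tf k β.B, β.t), (tf k β.B, β.t + 1)]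

def Blk.cyc8 (β : Blk k) : ZMod 8 → HOPVertex (12 * k + 9) :=
  ![(tf k β.c0, β.x0), (tf k β.c0, β.x0 + 1), (tf k β.c1, β.x1), (tf k β.c1, β.x1 + 1),
    (tf k β.c2, β.x2), (tf k β.c2, β.x2 + 1), (tf k β.c3, β.x3), (tf k β.c3, β.x3 + 1)]

def Blk.cyc (β : Blk k) : (i : Fin 2) → ZMod (2 * ![2, 4] i) → HOPVertex (12 * k + 9)
  | ⟨0, _⟩ => β.cyc4
  | ⟨1, _⟩ => β.cyc8

lemma Blk.alt4_even (β : Blk k) : ∀ j : ZMod 4, j.val % 2 = 0 →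
    β.cyc4 (j + 1) = HOPspouse (β.cyc4 j) := by
  intro j hj
  fin_cases j <;> first
    | exact absurd hj (by decide)
    | rfl

lemma Blk.alt8_even (β : Blk k) : ∀ j : ZMod 8, j.val % 2 = 0 →
    β.cyc8 (j + 1) = HOPspouse (β.cyc8 j) := by
  intro j hj
  fin_cases j <;> first
    | exact absurd hj (by decide)
    | rfl

lemma Blk.alt4_odd (β : Blk k) : ∀ j : ZMod 4, j.val % 2 = 1 →
    ¬ IsIEdge s(β.cyc4 j, β.cyc4 (j + 1)) := by
  intro j hj
  fin_cases j
  · exact absurd hj (by decide)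
  · exact not_isIEdge_of_fst_ne ((tf k).injective.ne β.hAB)
  · exact absurd hj (by decide)
  · exact not_isIEdge_of_fst_ne ((tf k).injective.ne β.hAB.symm)

end HOP62

namespace HOP62

variable {k : ℕ}

lemma Blk.alt8_odd (β : Blk k) : ∀ j : ZMod 8, j.val % 2 = 1 →
    ¬ IsIEdge s(β.cyc8 j, β.cyc8 (j + 1)) := by
  intro j hj
  fin_cases j
  · exact absurd hj (by decide)
  · exact not_isIEdge_of_fst_ne ((tf k).injective.ne β.h01)
  · exact absurd hj (by decide)
  · exact not_isIEdge_of_fst_ne ((tf k).injective.ne β.h12)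
  · exact absurd hj (by decide)
  · exact not_isIEdge_of_fst_ne ((tf k).injective.ne β.h23)
  · exact absurd hj (by decide)
  · exact not_isIEdge_of_fst_ne ((tf k).injective.ne β.h03.symm)

def Blk.V6 (β : Blk k) : Finset (ZMod (12 * k + 9)) := {β.A, β.B, β.c0, β.c1, β.c2, β.c3}

lemma Blk.card_V6 (β : Blk k) : β.V6.card = 6 := by
  obtain ⟨A, B, c0, c1, c2, c3, t, x0, x1, x2, x3,
    hAB, hA0, hA1, hA2, hA3, hB0, hB1, hB2, hB3, h01, h02, h03, h12, h13, h23⟩ := β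
  simp only [V6]
  rw [Finset.card_insert_of_notMem (by simp_all), Finset.card_insert_of_notMem (by simp_all),
    Finset.card_insert_of_notMem (by simp_all), Finset.card_insert_of_notMem (by simp_all),
    Finset.card_insert_of_notMem (by simp_all), Finset.card_singleton]

lemma Blk.card_V6c (β : Blk k) : β.V6ᶜ.card = 12 * k + 3 := by
  rw [Finset.card_compl, β.card_V6]
  rw [show Fintype.card (ZMod (12 * k + 9)) = 12 * k + 9 from ZMod.card _]
  omega

noncomputable def Blk.pkE (β : Blk k) : Fin (12 * k + 3) ≃ {x // x ∈ β.V6ᶜ} :=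
  ((β.V6ᶜ).equivFin.trans (finCongr β.card_V6c)).symm

lemma Blk.cyc4_fst_mem (β : Blk k) : ∀ j : ZMod 4, ∃ z ∈ β.V6, (β.cyc4 j).1 = tf k z := by
  intro j
  fin_cases j
  · exact ⟨β.A, by simp [V6], rfl⟩
  · exact ⟨β.A, by simp [V6], rfl⟩
  · exact ⟨β.B, by simp [V6], rfl⟩
  · exact ⟨β.B, by simp [V6], rfl⟩

lemma Blk.cyc8_fst_mem (β : Blk k) : ∀ j : ZMod 8, ∃ z ∈ β.V6, (β.cyc8 j).1 = tf k z := by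
  intro j
  fin_cases j
  · exact ⟨β.c0, by simp [V6], rfl⟩
  · exact ⟨β.c0, by simp [V6], rfl⟩
  · exact ⟨β.c1, by simp [V6], rfl⟩
  · exact ⟨β.c1, by simp [V6], rfl⟩
  · exact ⟨β.c2, by simp [V6], rfl⟩
  · exact ⟨β.c2, by simp [V6], rfl⟩
  · exact ⟨β.c3, by simp [V6], rfl⟩
  · exact ⟨β.c3, by simp [V6], rfl⟩

lemma Blk.cyc_fst_mem (β : Blk k) (i : Fin 2) (j : ZMod (2 * ![2, 4] i)) :
    ∃ z ∈ β.V6, (β.cyc i j).1 = tf k z := by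
  rcases i with ⟨iv, hi⟩
  interval_cases iv
  · exact β.cyc4_fst_mem j
  · exact β.cyc8_fst_mem j

end HOP62

namespace HOP62

variable {k : ℕ}

@[simp] lemma Blk.e4_0 (β : Blk k) : β.cyc4 0 = (tf k β.A, 0) := rfl
@[simp] lemma Blk.e4_1 (β : Blk k) : β.cyc4 1 = (tf k β.A, 1) := rfl
@[simp] lemma Blk.e4_2 (β : Blk k) : β.cyc4 2 = (tf k β.B, β.t) := rfl
@[simp] lemma Blk.e4_3 (β : Blk k) : β.cyc4 3 = (tf k β.B, β.t + 1) := rfl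
@[simp] lemma Blk.e8_0 (β : Blk k) : β.cyc8 0 = (tf k β.c0, β.x0) := rfl
@[simp] lemma Blk.e8_1 (β : Blk k) : β.cyc8 1 = (tf k β.c0, β.x0 + 1) := rfl
@[simp] lemma Blk.e8_2 (β : Blk k) : β.cyc8 2 = (tf k β.c1, β.x1) := rfl
@[simp] lemma Blk.e8_3 (β : Blk k) : β.cyc8 3 = (tf k β.c1, β.x1 + 1) := rfl
@[simp] lemma Blk.e8_4 (β : Blk k) : β.cyc8 4 = (tf k β.c2, β.x2) := rfl
@[simp] lemma Blk.e8_5 (β : Blk k) : β.cyc8 5 = (tf k β.c2, β.x2 + 1) := rfl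
@[simp] lemma Blk.e8_6 (β : Blk k) : β.cyc8 6 = (tf k β.c3, β.x3) := rfl
@[simp] lemma Blk.e8_7 (β : Blk k) : β.cyc8 7 = (tf k β.c3, β.x3 + 1) := rfl

lemma Blk.cyc4_inj (β : Blk k) : ∀ j j' : ZMod 4, β.cyc4 j = β.cyc4 j' → j = j' := by
  intro j j' h
  fin_cases j <;> fin_cases j' <;> first
    | rfl
    | (exfalso; simp only [Blk.cyc4, Fin.isValue, Matrix.cons_val, Blk.e4_0, Blk.e4_1, Blk.e4_2, Blk.e4_3, Prod.ext_iff,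
        Equiv.apply_eq_iff_eq] at h; simp [β.hAB, Ne.symm β.hAB, fin2_ne_add1, fin2_add1_ne] at h)

lemma Blk.cyc8_inj (β : Blk k) : ∀ j j' : ZMod 8, β.cyc8 j = β.cyc8 j' → j = j' := by
  intro j j' h
  fin_cases j <;> fin_cases j' <;> first
    | rfl
    | (exfalso; simp only [Blk.cyc8, Fin.isValue, Matrix.cons_val, Blk.e8_0, Blk.e8_1, Blk.e8_2, Blk.e8_3, Blk.e8_4, Blk.e8_5,
        Blk.e8_6, Blk.e8_7, Prod.ext_iff, Equiv.apply_eq_iff_eq] at h;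
        simp [β.h01, β.h02, β.h03, β.h12, β.h13, β.h23,
        Ne.symm β.h01, Ne.symm β.h02, Ne.symm β.h03, Ne.symm β.h12, Ne.symm β.h13,
        Ne.symm β.h23, fin2_ne_add1, fin2_add1_ne] at h)

lemma Blk.cyc48_ne (β : Blk k) : ∀ (j : ZMod 4) (j' : ZMod 8), β.cyc4 j ≠ β.cyc8 j' := by
  intro j j' h
  fin_cases j <;> fin_cases j' <;>
    (simp only [Blk.cyc4, Blk.cyc8, Fin.isValue, Matrix.cons_val, Blk.e4_0, Blk.e4_1, Blk.e4_2, Blk.e4_3, Blk.e8_0, Blk.e8_1, Blk.e8_2, Blk.e8_3,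
      Blk.e8_4, Blk.e8_5, Blk.e8_6, Blk.e8_7, Prod.ext_iff, Equiv.apply_eq_iff_eq] at h;
     simp [β.hA0, β.hA1, β.hA2, β.hA3, β.hB0, β.hB1, β.hB2, β.hB3] at h)

end HOP62

namespace HOP62

variable {k : ℕ}

instance instNZ2 (i : Fin 2) : NeZero (2 * (![2, 4] : Fin 2 → ℕ) i) :=
  ⟨by fin_cases i <;> decide⟩

noncomputable def Blk.factor (β : Blk k) : HOPFactor (12 * k + 9) (12 * k + 3) 2 ![2, 4] where
  pair a := (tf k (β.pkE a : ZMod (12 * k + 9)), 0)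
  cyc := β.cyc
  alt_even := by
    intro i
    rcases i with ⟨iv, hi⟩
    interval_cases iv
    · exact β.alt4_even
    · exact β.alt8_even
  alt_odd := by
    intro i
    rcases i with ⟨iv, hi⟩
    interval_cases iv
    · exact β.alt4_odd
    · exact β.alt8_odd
  spanning := by
    rw [Fintype.bijective_iff_injective_and_card]
    constructor
    · rintro (⟨a, p⟩ | ⟨i, j⟩) (⟨a', p'⟩ | ⟨i', j'⟩) h
      · simp only [Sum.elim_inl] at h
        have hfst : tf k (β.pkE a : ZMod (12 * k + 9)) = tf k (β.pkE a' : ZMod (12 * k + 9)) := by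
          fin_cases p <;> fin_cases p' <;> simpa [HOPspouse] using congrArg Prod.fst h
        have ha : a = a' := β.pkE.injective (Subtype.coe_injective ((tf k).injective hfst))
        subst ha
        have hp : p = p' := by
          fin_cases p <;> fin_cases p' <;> simp_all [HOPspouse, Prod.ext_iff]
        subst hp
        rfl
      · exfalso
        simp only [Sum.elim_inl, Sum.elim_inr] at h
        obtain ⟨z, hz, hz2⟩ := β.cyc_fst_mem i' j'
        have hfst : tf k (β.pkE a : ZMod (12 * k + 9)) = tf k z := by
          rw [← hz2]
          fin_cases p <;> simpa [HOPspouse] using congrArg Prod.fst h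
        have hmem := (β.pkE a).2
        rw [(tf k).injective hfst] at hmem
        exact (Finset.mem_compl.mp hmem) hz
      · exfalso
        simp only [Sum.elim_inl, Sum.elim_inr] at h
        obtain ⟨z, hz, hz2⟩ := β.cyc_fst_mem i j
        have hfst : tf k (β.pkE a' : ZMod (12 * k + 9)) = tf k z := by
          rw [← hz2]
          fin_cases p' <;> simpa [HOPspouse] using congrArg Prod.fst h.symm
        have hmem := (β.pkE a').2
        rw [(tf k).injective hfst] at hmem
        exact (Finset.mem_compl.mp hmem) hz
      · simp only [Sum.elim_inr] at h
        obtain ⟨iv, hi⟩ := i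
        obtain ⟨iv', hi'⟩ := i'
        interval_cases iv <;> interval_cases iv'
        · have hj : j = j' := β.cyc4_inj j j' h
          subst hj
          rfl
        · exact absurd h (β.cyc48_ne j j')
        · exact absurd h.symm (β.cyc48_ne j' j)
        · have hj : j = j' := β.cyc8_inj j j' h
          subst hj
          rfl
    · simp only [Fintype.card_sum, Fintype.card_prod, Fintype.card_sigma, Fintype.card_fin,
        Fin.sum_univ_two, ZMod.card]
      norm_num
      omega

end HOP62

namespace HOP62

variable {k : ℕ}

def Blk.slot (β : Blk k) : Fin 6 → Sym2 (HOPVertex (12 * k + 9))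
  | ⟨0, _⟩ => s((tf k β.A, 1), (tf k β.B, β.t))
  | ⟨1, _⟩ => s((tf k β.B, β.t + 1), (tf k β.A, 0))
  | ⟨2, _⟩ => s((tf k β.c0, β.x0 + 1), (tf k β.c1, β.x1))
  | ⟨3, _⟩ => s((tf k β.c1, β.x1 + 1), (tf k β.c2, β.x2))
  | ⟨4, _⟩ => s((tf k β.c2, β.x2 + 1), (tf k β.c3, β.x3))
  | ⟨5, _⟩ => s((tf k β.c3, β.x3 + 1), (tf k β.c0, β.x0))

lemma Blk.slot_mem (β : Blk k) : ∀ sl : Fin 6, β.slot sl ∈ β.factor.edges := by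
  intro sl
  fin_cases sl
  · exact Or.inr ⟨0, (1 : ZMod 4), rfl⟩
  · exact Or.inr ⟨0, (3 : ZMod 4), rfl⟩
  · exact Or.inr ⟨1, (1 : ZMod 8), rfl⟩
  · exact Or.inr ⟨1, (3 : ZMod 8), rfl⟩
  · exact Or.inr ⟨1, (5 : ZMod 8), rfl⟩
  · exact Or.inr ⟨1, (7 : ZMod 8), rfl⟩

lemma Blk.slot_fst_ne (β : Blk k) : ∀ sl : Fin 6,
    ∃ p q, β.slot sl = s(p, q) ∧ p.1 ≠ q.1 := by
  intro sl
  fin_cases sl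
  · exact ⟨_, _, rfl, (tf k).injective.ne β.hAB⟩
  · exact ⟨_, _, rfl, (tf k).injective.ne β.hAB.symm⟩
  · exact ⟨_, _, rfl, (tf k).injective.ne β.h01⟩
  · exact ⟨_, _, rfl, (tf k).injective.ne β.h12⟩
  · exact ⟨_, _, rfl, (tf k).injective.ne β.h23⟩
  · exact ⟨_, _, rfl, (tf k).injective.ne β.h03.symm⟩

lemma Blk.slot_not_diag (β : Blk k) (sl : Fin 6) : ¬ (β.slot sl).IsDiag := by
  obtain ⟨p, q, he, hne⟩ := β.slot_fst_ne sl
  rw [he, Sym2.mk_isDiag_iff]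
  exact fun h => hne (by rw [h])

lemma Blk.slot_not_I (β : Blk k) (sl : Fin 6) : ¬ IsIEdge (β.slot sl) := by
  obtain ⟨p, q, he, hne⟩ := β.slot_fst_ne sl
  rw [he]
  exact not_isIEdge_of_fst_ne hne

lemma Blk.slot4 (β : Blk k) : ∀ j : ZMod 4, ¬ IsIEdge s(β.cyc4 j, β.cyc4 (j + 1)) →
    ∃ sl, s(β.cyc4 j, β.cyc4 (j + 1)) = β.slot sl := by
  intro j hI
  fin_cases j
  · exact absurd ⟨(tf k β.A, 0), rfl⟩ hI
  · exact ⟨0, rfl⟩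
  · exact absurd ⟨(tf k β.B, β.t), rfl⟩ hI
  · exact ⟨1, rfl⟩

lemma Blk.slot8 (β : Blk k) : ∀ j : ZMod 8, ¬ IsIEdge s(β.cyc8 j, β.cyc8 (j + 1)) →
    ∃ sl, s(β.cyc8 j, β.cyc8 (j + 1)) = β.slot sl := by
  intro j hI
  fin_cases j
  · exact absurd ⟨(tf k β.c0, β.x0), rfl⟩ hI
  · exact ⟨2, rfl⟩
  · exact absurd ⟨(tf k β.c1, β.x1), rfl⟩ hI
  · exact ⟨3, rfl⟩
  · exact absurd ⟨(tf k β.c2, β.x2), rfl⟩ hI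
  · exact ⟨4, rfl⟩
  · exact absurd ⟨(tf k β.c3, β.x3), rfl⟩ hI
  · exact ⟨5, rfl⟩

lemma Blk.edges_sub (β : Blk k) {e : Sym2 (HOPVertex (12 * k + 9))}
    (he : e ∈ β.factor.edges) (hI : ¬ IsIEdge e) : ∃ sl, e = β.slot sl := by
  rcases he with ⟨a, ha⟩ | ⟨i, j, hij⟩
  · exact absurd ⟨_, ha⟩ hI
  · subst hij
    rcases i with ⟨iv, hi⟩
    interval_cases iv
    · exact β.slot4 j hI
    · exact β.slot8 j hI

end HOP62

namespace HOP62

lemma cast_ne {n : ℕ} {u v : ℕ} (h0 : u ≠ v) (h1 : u ≠ v + n) (h2 : v ≠ u + n)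
    (h3 : u < v + 2 * n) (h4 : v < u + 2 * n) : (u : ZMod n) ≠ (v : ZMod n) := by
  intro hE
  have hm : u ≡ v [MOD n] := (ZMod.natCast_eq_natCast_iff u v n).mp hE
  rcases Nat.le_total u v with hle | hle
  · obtain ⟨c, hc⟩ := (Nat.modEq_iff_dvd' hle).mp hm
    rcases c with _ | _ | c
    · omega
    · omega
    · have h5 : n * (c + 1 + 1) = n * c + 2 * n := by ring
      omega
  · obtain ⟨c, hc⟩ := (Nat.modEq_iff_dvd' hle).mp hm.symm
    rcases c with _ | _ | c
    · omega
    · omega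
    · have h5 : n * (c + 1 + 1) = n * c + 2 * n := by ring
      omega

lemma cne {k : ℕ} {u v : ℕ}
    (h : u ≠ v ∧ u ≠ v + (12 * k + 9) ∧ v ≠ u + (12 * k + 9) ∧
      u < v + 2 * (12 * k + 9) ∧ v < u + 2 * (12 * k + 9)) :
    ((u : ℕ) : ZMod (12 * k + 9)) ≠ ((v : ℕ) : ZMod (12 * k + 9)) :=
  cast_ne h.1 h.2.1 h.2.2.1 h.2.2.2.1 h.2.2.2.2

/-- family r=0 : C2 {0, 3b}, C4 at 4 with classes (3b-1, 3b+1). -/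
def bA0 (k : ℕ) (b : Fin (2 * k + 1)) (t : Fin 2) (j : Fin (4 * k + 3)) : Blk k where
  A := ((0 + 3 * (j : ℕ) : ℕ) : ZMod (12 * k + 9))
  B := ((3 * ((b : ℕ) + 1) + 3 * (j : ℕ) : ℕ) : ZMod (12 * k + 9))
  c0 := ((4 + 3 * (j : ℕ) : ℕ) : ZMod (12 * k + 9))
  c1 := ((3 * ((b : ℕ) + 1) + 3 + 3 * (j : ℕ) : ℕ) : ZMod (12 * k + 9))
  c2 := ((6 * ((b : ℕ) + 1) + 4 + 3 * (j : ℕ) : ℕ) : ZMod (12 * k + 9))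
  c3 := ((3 * ((b : ℕ) + 1) + 5 + 3 * (j : ℕ) : ℕ) : ZMod (12 * k + 9))
  t := t
  x0 := 1 + t
  x1 := t
  x2 := t
  x3 := t
  hAB := cne (by have hb := b.isLt; have hj := j.isLt; omega)
  hA0 := cne (by have hb := b.isLt; have hj := j.isLt; omega)
  hA1 := cne (by have hb := b.isLt; have hj := j.isLt; omega)
  hA2 := cne (by have hb := b.isLt; have hj := j.isLt; omega)
  hA3 := cne (by have hb := b.isLt; have hj := j.isLt; omega)
  hB0 := cne (by have hb := b.isLt; have hj := j.isLt; omega)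
  hB1 := cne (by have hb := b.isLt; have hj := j.isLt; omega)
  hB2 := cne (by have hb := b.isLt; have hj := j.isLt; omega)
  hB3 := cne (by have hb := b.isLt; have hj := j.isLt; omega)
  h01 := cne (by have hb := b.isLt; have hj := j.isLt; omega)
  h02 := cne (by have hb := b.isLt; have hj := j.isLt; omega)
  h03 := cne (by have hb := b.isLt; have hj := j.isLt; omega)
  h12 := cne (by have hb := b.isLt; have hj := j.isLt; omega)
  h13 := cne (by have hb := b.isLt; have hj := j.isLt; omega)
  h23 := cne (by have hb := b.isLt; have hj := j.isLt; omega)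

/-- family r=1 : C2 {1, 3b+1}, C4 at 5 with classes (3b-1, 3b+1). -/
def bA1 (k : ℕ) (b : Fin (2 * k + 1)) (t : Fin 2) (j : Fin (4 * k + 3)) : Blk k where
  A := ((1 + 3 * (j : ℕ) : ℕ) : ZMod (12 * k + 9))
  B := ((3 * ((b : ℕ) + 1) + 1 + 3 * (j : ℕ) : ℕ) : ZMod (12 * k + 9))
  c0 := ((5 + 3 * (j : ℕ) : ℕ) : ZMod (12 * k + 9))
  c1 := ((3 * ((b : ℕ) + 1) + 4 + 3 * (j : ℕ) : ℕ) : ZMod (12 * k + 9))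
  c2 := ((6 * ((b : ℕ) + 1) + 5 + 3 * (j : ℕ) : ℕ) : ZMod (12 * k + 9))
  c3 := ((3 * ((b : ℕ) + 1) + 6 + 3 * (j : ℕ) : ℕ) : ZMod (12 * k + 9))
  t := t
  x0 := 1 + t
  x1 := t
  x2 := t
  x3 := t
  hAB := cne (by have hb := b.isLt; have hj := j.isLt; omega)
  hA0 := cne (by have hb := b.isLt; have hj := j.isLt; omega)
  hA1 := cne (by have hb := b.isLt; have hj := j.isLt; omega)
  hA2 := cne (by have hb := b.isLt; have hj := j.isLt; omega)
  hA3 := cne (by have hb := b.isLt; have hj := j.isLt; omega)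
  hB0 := cne (by have hb := b.isLt; have hj := j.isLt; omega)
  hB1 := cne (by have hb := b.isLt; have hj := j.isLt; omega)
  hB2 := cne (by have hb := b.isLt; have hj := j.isLt; omega)
  hB3 := cne (by have hb := b.isLt; have hj := j.isLt; omega)
  h01 := cne (by have hb := b.isLt; have hj := j.isLt; omega)
  h02 := cne (by have hb := b.isLt; have hj := j.isLt; omega)
  h03 := cne (by have hb := b.isLt; have hj := j.isLt; omega)
  h12 := cne (by have hb := b.isLt; have hj := j.isLt; omega)
  h13 := cne (by have hb := b.isLt; have hj := j.isLt; omega)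
  h23 := cne (by have hb := b.isLt; have hj := j.isLt; omega)

/-- family r=2 : C2 {2, 3b+2}, C4 at 6 with classes (3b-2, 3b-1). -/
def bA2 (k : ℕ) (b : Fin (2 * k + 1)) (t : Fin 2) (j : Fin (4 * k + 3)) : Blk k where
  A := ((2 + 3 * (j : ℕ) : ℕ) : ZMod (12 * k + 9))
  B := ((3 * ((b : ℕ) + 1) + 2 + 3 * (j : ℕ) : ℕ) : ZMod (12 * k + 9))
  c0 := ((6 + 3 * (j : ℕ) : ℕ) : ZMod (12 * k + 9))
  c1 := ((3 * ((b : ℕ) + 1) + 4 + 3 * (j : ℕ) : ℕ) : ZMod (12 * k + 9))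
  c2 := ((6 * ((b : ℕ) + 1) + 3 + 3 * (j : ℕ) : ℕ) : ZMod (12 * k + 9))
  c3 := ((3 * ((b : ℕ) + 1) + 5 + 3 * (j : ℕ) : ℕ) : ZMod (12 * k + 9))
  t := t
  x0 := 1 + t
  x1 := t
  x2 := t
  x3 := t
  hAB := cne (by have hb := b.isLt; have hj := j.isLt; omega)
  hA0 := cne (by have hb := b.isLt; have hj := j.isLt; omega)
  hA1 := cne (by have hb := b.isLt; have hj := j.isLt; omega)
  hA2 := cne (by have hb := b.isLt; have hj := j.isLt; omega)
  hA3 := cne (by have hb := b.isLt; have hj := j.isLt; omega)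
  hB0 := cne (by have hb := b.isLt; have hj := j.isLt; omega)
  hB1 := cne (by have hb := b.isLt; have hj := j.isLt; omega)
  hB2 := cne (by have hb := b.isLt; have hj := j.isLt; omega)
  hB3 := cne (by have hb := b.isLt; have hj := j.isLt; omega)
  h01 := cne (by have hb := b.isLt; have hj := j.isLt; omega)
  h02 := cne (by have hb := b.isLt; have hj := j.isLt; omega)
  h03 := cne (by have hb := b.isLt; have hj := j.isLt; omega)
  h12 := cne (by have hb := b.isLt; have hj := j.isLt; omega)
  h13 := cne (by have hb := b.isLt; have hj := j.isLt; omega)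
  h23 := cne (by have hb := b.isLt; have hj := j.isLt; omega)

/-- special family : C2 {1, 2}, C4 at 12k+8 with classes (1, 6k+4). -/
def bB (k : ℕ) (t : Fin 2) (j : Fin (4 * k + 3)) : Blk k where
  A := ((1 + 3 * (j : ℕ) : ℕ) : ZMod (12 * k + 9))
  B := ((2 + 3 * (j : ℕ) : ℕ) : ZMod (12 * k + 9))
  c0 := ((12 * k + 8 + 3 * (j : ℕ) : ℕ) : ZMod (12 * k + 9))
  c1 := ((12 * k + 9 + 3 * (j : ℕ) : ℕ) : ZMod (12 * k + 9))
  c2 := ((18 * k + 13 + 3 * (j : ℕ) : ℕ) : ZMod (12 * k + 9))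
  c3 := ((18 * k + 12 + 3 * (j : ℕ) : ℕ) : ZMod (12 * k + 9))
  t := t
  x0 := 1 + t
  x1 := t
  x2 := 1 + t
  x3 := 1 + t
  hAB := cne (by have hj := j.isLt; omega)
  hA0 := cne (by have hj := j.isLt; omega)
  hA1 := cne (by have hj := j.isLt; omega)
  hA2 := cne (by have hj := j.isLt; omega)
  hA3 := cne (by have hj := j.isLt; omega)
  hB0 := cne (by have hj := j.isLt; omega)
  hB1 := cne (by have hj := j.isLt; omega)
  hB2 := cne (by have hj := j.isLt; omega)
  hB3 := cne (by have hj := j.isLt; omega)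
  h01 := cne (by have hj := j.isLt; omega)
  h02 := cne (by have hj := j.isLt; omega)
  h03 := cne (by have hj := j.isLt; omega)
  h12 := cne (by have hj := j.isLt; omega)
  h13 := cne (by have hj := j.isLt; omega)
  h23 := cne (by have hj := j.isLt; omega)

/-- index type of the solution family -/
def Idx (k : ℕ) : Type :=
  ((Fin (2 * k + 1) × Fin 3 × Fin 2) ⊕ Fin 2) × Fin (4 * k + 3)

instance : Fintype (Idx k) := by unfold Idx; infer_instance

def blkOf : Idx k → Blk k
  | (Sum.inl (b, ⟨0, _⟩, t), j) => bA0 k b t j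
  | (Sum.inl (b, ⟨1, _⟩, t), j) => bA1 k b t j
  | (Sum.inl (b, ⟨2, _⟩, t), j) => bA2 k b t j
  | (Sum.inr t, j) => bB k t j

end HOP62

namespace HOP62

variable {k : ℕ}

lemma val_add_mod3 (x y : ZMod (12 * k + 9)) :
    (x + y).val % 3 = (x.val + y.val) % 3 := by
  rw [ZMod.val_add]
  exact Nat.mod_mod_of_dvd _ ⟨4 * k + 3, by ring⟩

lemma sub_residue (P : ZMod (12 * k + 9)) (a : ℕ) (hr : P.val % 3 = a % 3) :
    (P - ((a : ℕ) : ZMod (12 * k + 9))).val % 3 = 0 := by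
  have h2 : (P - ((a : ℕ) : ZMod (12 * k + 9))) + ((a : ℕ) : ZMod (12 * k + 9)) = P := by ring
  have h3 := val_add_mod3 (P - ((a : ℕ) : ZMod (12 * k + 9))) ((a : ℕ) : ZMod (12 * k + 9))
  rw [h2] at h3
  rw [ZMod.val_natCast] at h3
  have h4 : a % (12 * k + 9) % 3 = a % 3 := Nat.mod_mod_of_dvd _ ⟨4 * k + 3, by ring⟩
  omega

lemma exists_shift (w : ZMod (12 * k + 9)) (hw : w.val % 3 = 0) :
    ∃ j : Fin (4 * k + 3), ((3 * (j : ℕ) : ℕ) : ZMod (12 * k + 9)) = w := by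
  have hlt := w.val_lt
  refine ⟨⟨w.val / 3, by omega⟩, ?_⟩
  have h3 : 3 * ((⟨w.val / 3, by omega⟩ : Fin (4 * k + 3)) : ℕ) = w.val := by
    show 3 * (w.val / 3) = w.val
    omega
  rw [h3]
  exact ZMod.natCast_zmod_val w

lemma leaf (N1 N2 d : ℕ) (P Q : ZMod (12 * k + 9))
    (hN : N2 = N1 + d) (hr : P.val % 3 = N1 % 3)
    (hQ : Q = P + ((d : ℕ) : ZMod (12 * k + 9))) :
    ∃ j : Fin (4 * k + 3),
      ((N1 + 3 * (j : ℕ) : ℕ) : ZMod (12 * k + 9)) = P ∧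
      ((N2 + 3 * (j : ℕ) : ℕ) : ZMod (12 * k + 9)) = Q := by
  obtain ⟨j, hj⟩ := exists_shift (P - ((N1 : ℕ) : ZMod (12 * k + 9))) (sub_residue P N1 hr)
  refine ⟨j, ?_, ?_⟩
  · have h1 : ((N1 + 3 * (j : ℕ) : ℕ) : ZMod (12 * k + 9)) =
        ((N1 : ℕ) : ZMod (12 * k + 9)) + ((3 * (j : ℕ) : ℕ) : ZMod (12 * k + 9)) := by
      push_cast
      ring
    rw [h1, hj]
    ring
  · have h1 : ((N2 + 3 * (j : ℕ) : ℕ) : ZMod (12 * k + 9)) =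
        ((N1 : ℕ) : ZMod (12 * k + 9)) + ((d : ℕ) : ZMod (12 * k + 9)) +
          ((3 * (j : ℕ) : ℕ) : ZMod (12 * k + 9)) := by
      rw [hN]
      push_cast
      ring
    rw [h1, hj, hQ]
    ring

end HOP62

namespace HOP62

variable {k : ℕ}

lemma cover (P Q : ZMod (12 * k + 9)) (u v : Fin 2) (d : ℕ)
    (hd1 : 1 ≤ d) (hd2 : d ≤ 6 * k + 4)
    (hQ : Q = P + ((d : ℕ) : ZMod (12 * k + 9))) :
    ∃ ι : Idx k, ∃ sl : Fin 6, (blkOf ι).slot sl = s((tf k P, u), (tf k Q, v)) := by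
  have hr3 : P.val % 3 = 0 ∨ P.val % 3 = 1 ∨ P.val % 3 = 2 := by omega
  have hd30 : d % 3 = 0 ∨ d % 3 = 1 ∨ d % 3 = 2 := by omega
  rcases hd30 with hd3 | hd3 | hd3
  · rcases fin2_eq_or 0 u with hu | hu <;> rcases hr3 with hr | hr | hr
    · obtain ⟨j, hc1, hc2⟩ := leaf (0) (3 * (d / 3 - 1 + 1) + 0) (d) P Q (by omega) (by omega) hQ
      refine ⟨((Sum.inl (⟨d / 3 - 1, by omega⟩, 0, v + 1), j) : Idx k), 1, ?_⟩
      calc (blkOf ((Sum.inl (⟨d / 3 - 1, by omega⟩, 0, v + 1), j) : Idx k)).slot 1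
          = s((tf k ((3 * (d / 3 - 1 + 1) + 0 + 3 * (j : ℕ) : ℕ) : ZMod (12 * k + 9)), v + 1 + 1),
              (tf k ((0 + 3 * (j : ℕ) : ℕ) : ZMod (12 * k + 9)), 0)) := rfl
        _ = s((tf k Q, v + 1 + 1), (tf k P, 0)) := by rw [hc1, hc2]
        _ = s((tf k P, 0), (tf k Q, v + 1 + 1)) := Sym2.eq_swap
        _ = s((tf k P, u), (tf k Q, v)) := by rw [hu]; try (fin_cases v <;> rfl)
    · obtain ⟨j, hc1, hc2⟩ := leaf (1) (3 * (d / 3 - 1 + 1) + 1) (d) P Q (by omega) (by omega) hQ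
      refine ⟨((Sum.inl (⟨d / 3 - 1, by omega⟩, 1, v + 1), j) : Idx k), 1, ?_⟩
      calc (blkOf ((Sum.inl (⟨d / 3 - 1, by omega⟩, 1, v + 1), j) : Idx k)).slot 1
          = s((tf k ((3 * (d / 3 - 1 + 1) + 1 + 3 * (j : ℕ) : ℕ) : ZMod (12 * k + 9)), v + 1 + 1),
              (tf k ((1 + 3 * (j : ℕ) : ℕ) : ZMod (12 * k + 9)), 0)) := rfl
        _ = s((tf k Q, v + 1 + 1), (tf k P, 0)) := by rw [hc1, hc2]
        _ = s((tf k P, 0), (tf k Q, v + 1 + 1)) := Sym2.eq_swap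
        _ = s((tf k P, u), (tf k Q, v)) := by rw [hu]; try (fin_cases v <;> rfl)
    · obtain ⟨j, hc1, hc2⟩ := leaf (2) (3 * (d / 3 - 1 + 1) + 2) (d) P Q (by omega) (by omega) hQ
      refine ⟨((Sum.inl (⟨d / 3 - 1, by omega⟩, 2, v + 1), j) : Idx k), 1, ?_⟩
      calc (blkOf ((Sum.inl (⟨d / 3 - 1, by omega⟩, 2, v + 1), j) : Idx k)).slot 1
          = s((tf k ((3 * (d / 3 - 1 + 1) + 2 + 3 * (j : ℕ) : ℕ) : ZMod (12 * k + 9)), v + 1 + 1),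
              (tf k ((2 + 3 * (j : ℕ) : ℕ) : ZMod (12 * k + 9)), 0)) := rfl
        _ = s((tf k Q, v + 1 + 1), (tf k P, 0)) := by rw [hc1, hc2]
        _ = s((tf k P, 0), (tf k Q, v + 1 + 1)) := Sym2.eq_swap
        _ = s((tf k P, u), (tf k Q, v)) := by rw [hu]; try (fin_cases v <;> rfl)
    · obtain ⟨j, hc1, hc2⟩ := leaf (0) (3 * (d / 3 - 1 + 1) + 0) (d) P Q (by omega) (by omega) hQ
      refine ⟨((Sum.inl (⟨d / 3 - 1, by omega⟩, 0, v), j) : Idx k), 0, ?_⟩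
      calc (blkOf ((Sum.inl (⟨d / 3 - 1, by omega⟩, 0, v), j) : Idx k)).slot 0
          = s((tf k ((0 + 3 * (j : ℕ) : ℕ) : ZMod (12 * k + 9)), 1),
              (tf k ((3 * (d / 3 - 1 + 1) + 0 + 3 * (j : ℕ) : ℕ) : ZMod (12 * k + 9)), v)) := rfl
        _ = s((tf k P, 1), (tf k Q, v)) := by rw [hc1, hc2]
        _ = s((tf k P, u), (tf k Q, v)) := by rw [hu]; try (fin_cases v <;> rfl)
    · obtain ⟨j, hc1, hc2⟩ := leaf (1) (3 * (d / 3 - 1 + 1) + 1) (d) P Q (by omega) (by omega) hQ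
      refine ⟨((Sum.inl (⟨d / 3 - 1, by omega⟩, 1, v), j) : Idx k), 0, ?_⟩
      calc (blkOf ((Sum.inl (⟨d / 3 - 1, by omega⟩, 1, v), j) : Idx k)).slot 0
          = s((tf k ((1 + 3 * (j : ℕ) : ℕ) : ZMod (12 * k + 9)), 1),
              (tf k ((3 * (d / 3 - 1 + 1) + 1 + 3 * (j : ℕ) : ℕ) : ZMod (12 * k + 9)), v)) := rfl
        _ = s((tf k P, 1), (tf k Q, v)) := by rw [hc1, hc2]
        _ = s((tf k P, u), (tf k Q, v)) := by rw [hu]; try (fin_cases v <;> rfl)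
    · obtain ⟨j, hc1, hc2⟩ := leaf (2) (3 * (d / 3 - 1 + 1) + 2) (d) P Q (by omega) (by omega) hQ
      refine ⟨((Sum.inl (⟨d / 3 - 1, by omega⟩, 2, v), j) : Idx k), 0, ?_⟩
      calc (blkOf ((Sum.inl (⟨d / 3 - 1, by omega⟩, 2, v), j) : Idx k)).slot 0
          = s((tf k ((2 + 3 * (j : ℕ) : ℕ) : ZMod (12 * k + 9)), 1),
              (tf k ((3 * (d / 3 - 1 + 1) + 2 + 3 * (j : ℕ) : ℕ) : ZMod (12 * k + 9)), v)) := rfl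
        _ = s((tf k P, 1), (tf k Q, v)) := by rw [hc1, hc2]
        _ = s((tf k P, u), (tf k Q, v)) := by rw [hu]; try (fin_cases v <;> rfl)
  · by_cases hdone : d = 1
    · subst hdone
      rcases fin2_eq_or u v with hv | hv <;> rcases hr3 with hr | hr | hr
      · obtain ⟨j, hc1, hc2⟩ := leaf (6) (3 * (0 + 1) + 4) (1) P Q (by omega) (by omega) hQ
        refine ⟨((Sum.inl (⟨0, by omega⟩, 2, u), j) : Idx k), 2, ?_⟩
        calc (blkOf ((Sum.inl (⟨0, by omega⟩, 2, u), j) : Idx k)).slot 2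
            = s((tf k ((6 + 3 * (j : ℕ) : ℕ) : ZMod (12 * k + 9)), 1 + u + 1),
                (tf k ((3 * (0 + 1) + 4 + 3 * (j : ℕ) : ℕ) : ZMod (12 * k + 9)), u)) := rfl
          _ = s((tf k P, 1 + u + 1), (tf k Q, u)) := by rw [hc1, hc2]
          _ = s((tf k P, u), (tf k Q, v)) := by rw [hv]; try (fin_cases u <;> rfl)
      · rcases fin2_eq_or 0 u with hu | hu
        · obtain ⟨j, hc1, hc2⟩ := leaf (1) (2) (1) P Q (by omega) (by omega) hQ
          refine ⟨((Sum.inr (1), j) : Idx k), 1, ?_⟩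
          calc (blkOf ((Sum.inr (1), j) : Idx k)).slot 1
              = s((tf k ((2 + 3 * (j : ℕ) : ℕ) : ZMod (12 * k + 9)), 1 + 1),
                  (tf k ((1 + 3 * (j : ℕ) : ℕ) : ZMod (12 * k + 9)), 0)) := rfl
            _ = s((tf k Q, 1 + 1), (tf k P, 0)) := by rw [hc1, hc2]
            _ = s((tf k P, 0), (tf k Q, 1 + 1)) := Sym2.eq_swap
            _ = s((tf k P, u), (tf k Q, v)) := by rw [hv, hu]; try rfl
        · obtain ⟨j, hc1, hc2⟩ := leaf (1) (2) (1) P Q (by omega) (by omega) hQ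
          refine ⟨((Sum.inr (1), j) : Idx k), 0, ?_⟩
          calc (blkOf ((Sum.inr (1), j) : Idx k)).slot 0
              = s((tf k ((1 + 3 * (j : ℕ) : ℕ) : ZMod (12 * k + 9)), 1),
                  (tf k ((2 + 3 * (j : ℕ) : ℕ) : ZMod (12 * k + 9)), 1)) := rfl
            _ = s((tf k P, 1), (tf k Q, 1)) := by rw [hc1, hc2]
            _ = s((tf k P, u), (tf k Q, v)) := by rw [hv, hu]; try rfl
      · obtain ⟨j, hc1, hc2⟩ := leaf (12 * k + 8) (12 * k + 9) (1) P Q (by omega) (by omega) hQ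
        refine ⟨((Sum.inr (u), j) : Idx k), 2, ?_⟩
        calc (blkOf ((Sum.inr (u), j) : Idx k)).slot 2
            = s((tf k ((12 * k + 8 + 3 * (j : ℕ) : ℕ) : ZMod (12 * k + 9)), 1 + u + 1),
                (tf k ((12 * k + 9 + 3 * (j : ℕ) : ℕ) : ZMod (12 * k + 9)), u)) := rfl
          _ = s((tf k P, 1 + u + 1), (tf k Q, u)) := by rw [hc1, hc2]
          _ = s((tf k P, u), (tf k Q, v)) := by rw [hv]; try (fin_cases u <;> rfl)
      · obtain ⟨j, hc1, hc2⟩ := leaf (18 * k + 12) (18 * k + 13) (1) P Q (by omega) (by omega) hQ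
        refine ⟨((Sum.inr (u + 1), j) : Idx k), 4, ?_⟩
        calc (blkOf ((Sum.inr (u + 1), j) : Idx k)).slot 4
            = s((tf k ((18 * k + 13 + 3 * (j : ℕ) : ℕ) : ZMod (12 * k + 9)), 1 + (u + 1) + 1),
                (tf k ((18 * k + 12 + 3 * (j : ℕ) : ℕ) : ZMod (12 * k + 9)), 1 + (u + 1))) := rfl
          _ = s((tf k Q, 1 + (u + 1) + 1), (tf k P, 1 + (u + 1))) := by rw [hc1, hc2]
          _ = s((tf k P, 1 + (u + 1)), (tf k Q, 1 + (u + 1) + 1)) := Sym2.eq_swap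
          _ = s((tf k P, u), (tf k Q, v)) := by rw [hv]; try (fin_cases u <;> rfl)
      · rcases fin2_eq_or 0 u with hu | hu
        · obtain ⟨j, hc1, hc2⟩ := leaf (1) (2) (1) P Q (by omega) (by omega) hQ
          refine ⟨((Sum.inr (0), j) : Idx k), 1, ?_⟩
          calc (blkOf ((Sum.inr (0), j) : Idx k)).slot 1
              = s((tf k ((2 + 3 * (j : ℕ) : ℕ) : ZMod (12 * k + 9)), 0 + 1),
                  (tf k ((1 + 3 * (j : ℕ) : ℕ) : ZMod (12 * k + 9)), 0)) := rfl
            _ = s((tf k Q, 0 + 1), (tf k P, 0)) := by rw [hc1, hc2]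
            _ = s((tf k P, 0), (tf k Q, 0 + 1)) := Sym2.eq_swap
            _ = s((tf k P, u), (tf k Q, v)) := by rw [hv, hu]; try rfl
        · obtain ⟨j, hc1, hc2⟩ := leaf (1) (2) (1) P Q (by omega) (by omega) hQ
          refine ⟨((Sum.inr (0), j) : Idx k), 0, ?_⟩
          calc (blkOf ((Sum.inr (0), j) : Idx k)).slot 0
              = s((tf k ((1 + 3 * (j : ℕ) : ℕ) : ZMod (12 * k + 9)), 1),
                  (tf k ((2 + 3 * (j : ℕ) : ℕ) : ZMod (12 * k + 9)), 0)) := rfl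
            _ = s((tf k P, 1), (tf k Q, 0)) := by rw [hc1, hc2]
            _ = s((tf k P, u), (tf k Q, v)) := by rw [hv, hu]; try rfl
      · obtain ⟨j, hc1, hc2⟩ := leaf (3 * (0 + 1) + 5) (6 * (0 + 1) + 3) (1) P Q (by omega) (by omega) hQ
        refine ⟨((Sum.inl (⟨0, by omega⟩, 2, u), j) : Idx k), 4, ?_⟩
        calc (blkOf ((Sum.inl (⟨0, by omega⟩, 2, u), j) : Idx k)).slot 4
            = s((tf k ((6 * (0 + 1) + 3 + 3 * (j : ℕ) : ℕ) : ZMod (12 * k + 9)), u + 1),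
                (tf k ((3 * (0 + 1) + 5 + 3 * (j : ℕ) : ℕ) : ZMod (12 * k + 9)), u)) := rfl
          _ = s((tf k Q, u + 1), (tf k P, u)) := by rw [hc1, hc2]
          _ = s((tf k P, u), (tf k Q, u + 1)) := Sym2.eq_swap
          _ = s((tf k P, u), (tf k Q, v)) := by rw [hv]; try (fin_cases u <;> rfl)
    · by_cases hdmax : d = 6 * k + 4
      · subst hdmax
        rcases fin2_eq_or u v with hv | hv <;> rcases hr3 with hr | hr | hr
        · obtain ⟨j, hc1, hc2⟩ := leaf (12 * k + 9) (18 * k + 13) (6 * k + 4) P Q (by omega) (by omega) hQ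
          refine ⟨((Sum.inr (u + 1), j) : Idx k), 3, ?_⟩
          calc (blkOf ((Sum.inr (u + 1), j) : Idx k)).slot 3
              = s((tf k ((12 * k + 9 + 3 * (j : ℕ) : ℕ) : ZMod (12 * k + 9)), u + 1 + 1),
                  (tf k ((18 * k + 13 + 3 * (j : ℕ) : ℕ) : ZMod (12 * k + 9)), 1 + (u + 1))) := rfl
            _ = s((tf k P, u + 1 + 1), (tf k Q, 1 + (u + 1))) := by rw [hc1, hc2]
            _ = s((tf k P, u), (tf k Q, v)) := by rw [hv]; try (fin_cases u <;> rfl)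
        · obtain ⟨j, hc1, hc2⟩ := leaf (4) (3 * (2 * k + 1) + 5) (6 * k + 4) P Q (by omega) (by omega) hQ
          refine ⟨((Sum.inl (⟨2 * k, by omega⟩, 0, u + 1), j) : Idx k), 5, ?_⟩
          calc (blkOf ((Sum.inl (⟨2 * k, by omega⟩, 0, u + 1), j) : Idx k)).slot 5
              = s((tf k ((3 * (2 * k + 1) + 5 + 3 * (j : ℕ) : ℕ) : ZMod (12 * k + 9)), u + 1 + 1),
                  (tf k ((4 + 3 * (j : ℕ) : ℕ) : ZMod (12 * k + 9)), 1 + (u + 1))) := rfl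
            _ = s((tf k Q, u + 1 + 1), (tf k P, 1 + (u + 1))) := by rw [hc1, hc2]
            _ = s((tf k P, 1 + (u + 1)), (tf k Q, u + 1 + 1)) := Sym2.eq_swap
            _ = s((tf k P, u), (tf k Q, v)) := by rw [hv]; try (fin_cases u <;> rfl)
        · obtain ⟨j, hc1, hc2⟩ := leaf (5) (3 * (2 * k + 1) + 6) (6 * k + 4) P Q (by omega) (by omega) hQ
          refine ⟨((Sum.inl (⟨2 * k, by omega⟩, 1, u + 1), j) : Idx k), 5, ?_⟩
          calc (blkOf ((Sum.inl (⟨2 * k, by omega⟩, 1, u + 1), j) : Idx k)).slot 5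
              = s((tf k ((3 * (2 * k + 1) + 6 + 3 * (j : ℕ) : ℕ) : ZMod (12 * k + 9)), u + 1 + 1),
                  (tf k ((5 + 3 * (j : ℕ) : ℕ) : ZMod (12 * k + 9)), 1 + (u + 1))) := rfl
            _ = s((tf k Q, u + 1 + 1), (tf k P, 1 + (u + 1))) := by rw [hc1, hc2]
            _ = s((tf k P, 1 + (u + 1)), (tf k Q, u + 1 + 1)) := Sym2.eq_swap
            _ = s((tf k P, u), (tf k Q, v)) := by rw [hv]; try (fin_cases u <;> rfl)
        · obtain ⟨j, hc1, hc2⟩ := leaf (3 * (2 * k + 1) + 3) (6 * (2 * k + 1) + 4) (6 * k + 4) P Q (by omega) (by omega) hQ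
          refine ⟨((Sum.inl (⟨2 * k, by omega⟩, 0, u + 1), j) : Idx k), 3, ?_⟩
          calc (blkOf ((Sum.inl (⟨2 * k, by omega⟩, 0, u + 1), j) : Idx k)).slot 3
              = s((tf k ((3 * (2 * k + 1) + 3 + 3 * (j : ℕ) : ℕ) : ZMod (12 * k + 9)), u + 1 + 1),
                  (tf k ((6 * (2 * k + 1) + 4 + 3 * (j : ℕ) : ℕ) : ZMod (12 * k + 9)), u + 1)) := rfl
            _ = s((tf k P, u + 1 + 1), (tf k Q, u + 1)) := by rw [hc1, hc2]
            _ = s((tf k P, u), (tf k Q, v)) := by rw [hv]; try (fin_cases u <;> rfl)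
        · obtain ⟨j, hc1, hc2⟩ := leaf (3 * (2 * k + 1) + 4) (6 * (2 * k + 1) + 5) (6 * k + 4) P Q (by omega) (by omega) hQ
          refine ⟨((Sum.inl (⟨2 * k, by omega⟩, 1, u + 1), j) : Idx k), 3, ?_⟩
          calc (blkOf ((Sum.inl (⟨2 * k, by omega⟩, 1, u + 1), j) : Idx k)).slot 3
              = s((tf k ((3 * (2 * k + 1) + 4 + 3 * (j : ℕ) : ℕ) : ZMod (12 * k + 9)), u + 1 + 1),
                  (tf k ((6 * (2 * k + 1) + 5 + 3 * (j : ℕ) : ℕ) : ZMod (12 * k + 9)), u + 1)) := rfl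
            _ = s((tf k P, u + 1 + 1), (tf k Q, u + 1)) := by rw [hc1, hc2]
            _ = s((tf k P, u), (tf k Q, v)) := by rw [hv]; try (fin_cases u <;> rfl)
        · obtain ⟨j, hc1, hc2⟩ := leaf (12 * k + 8) (18 * k + 12) (6 * k + 4) P Q (by omega) (by omega) hQ
          refine ⟨((Sum.inr (u + 1), j) : Idx k), 5, ?_⟩
          calc (blkOf ((Sum.inr (u + 1), j) : Idx k)).slot 5
              = s((tf k ((18 * k + 12 + 3 * (j : ℕ) : ℕ) : ZMod (12 * k + 9)), 1 + (u + 1) + 1),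
                  (tf k ((12 * k + 8 + 3 * (j : ℕ) : ℕ) : ZMod (12 * k + 9)), 1 + (u + 1))) := rfl
            _ = s((tf k Q, 1 + (u + 1) + 1), (tf k P, 1 + (u + 1))) := by rw [hc1, hc2]
            _ = s((tf k P, 1 + (u + 1)), (tf k Q, 1 + (u + 1) + 1)) := Sym2.eq_swap
            _ = s((tf k P, u), (tf k Q, v)) := by rw [hv]; try (fin_cases u <;> rfl)
      · rcases fin2_eq_or u v with hv | hv <;> rcases hr3 with hr | hr | hr
        · obtain ⟨j, hc1, hc2⟩ := leaf (6) (3 * ((d - 4) / 3 + 1 + 1) + 4) (d) P Q (by omega) (by omega) hQ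
          refine ⟨((Sum.inl (⟨(d - 4) / 3 + 1, by omega⟩, 2, u), j) : Idx k), 2, ?_⟩
          calc (blkOf ((Sum.inl (⟨(d - 4) / 3 + 1, by omega⟩, 2, u), j) : Idx k)).slot 2
              = s((tf k ((6 + 3 * (j : ℕ) : ℕ) : ZMod (12 * k + 9)), 1 + u + 1),
                  (tf k ((3 * ((d - 4) / 3 + 1 + 1) + 4 + 3 * (j : ℕ) : ℕ) : ZMod (12 * k + 9)), u)) := rfl
            _ = s((tf k P, 1 + u + 1), (tf k Q, u)) := by rw [hc1, hc2]
            _ = s((tf k P, u), (tf k Q, v)) := by rw [hv]; try (fin_cases u <;> rfl)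
        · obtain ⟨j, hc1, hc2⟩ := leaf (4) (3 * ((d - 4) / 3 + 1) + 5) (d) P Q (by omega) (by omega) hQ
          refine ⟨((Sum.inl (⟨(d - 4) / 3, by omega⟩, 0, u + 1), j) : Idx k), 5, ?_⟩
          calc (blkOf ((Sum.inl (⟨(d - 4) / 3, by omega⟩, 0, u + 1), j) : Idx k)).slot 5
              = s((tf k ((3 * ((d - 4) / 3 + 1) + 5 + 3 * (j : ℕ) : ℕ) : ZMod (12 * k + 9)), u + 1 + 1),
                  (tf k ((4 + 3 * (j : ℕ) : ℕ) : ZMod (12 * k + 9)), 1 + (u + 1))) := rfl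
            _ = s((tf k Q, u + 1 + 1), (tf k P, 1 + (u + 1))) := by rw [hc1, hc2]
            _ = s((tf k P, 1 + (u + 1)), (tf k Q, u + 1 + 1)) := Sym2.eq_swap
            _ = s((tf k P, u), (tf k Q, v)) := by rw [hv]; try (fin_cases u <;> rfl)
        · obtain ⟨j, hc1, hc2⟩ := leaf (5) (3 * ((d - 4) / 3 + 1) + 6) (d) P Q (by omega) (by omega) hQ
          refine ⟨((Sum.inl (⟨(d - 4) / 3, by omega⟩, 1, u + 1), j) : Idx k), 5, ?_⟩
          calc (blkOf ((Sum.inl (⟨(d - 4) / 3, by omega⟩, 1, u + 1), j) : Idx k)).slot 5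
              = s((tf k ((3 * ((d - 4) / 3 + 1) + 6 + 3 * (j : ℕ) : ℕ) : ZMod (12 * k + 9)), u + 1 + 1),
                  (tf k ((5 + 3 * (j : ℕ) : ℕ) : ZMod (12 * k + 9)), 1 + (u + 1))) := rfl
            _ = s((tf k Q, u + 1 + 1), (tf k P, 1 + (u + 1))) := by rw [hc1, hc2]
            _ = s((tf k P, 1 + (u + 1)), (tf k Q, u + 1 + 1)) := Sym2.eq_swap
            _ = s((tf k P, u), (tf k Q, v)) := by rw [hv]; try (fin_cases u <;> rfl)
        · obtain ⟨j, hc1, hc2⟩ := leaf (3 * ((d - 4) / 3 + 1) + 3) (6 * ((d - 4) / 3 + 1) + 4) (d) P Q (by omega) (by omega) hQ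
          refine ⟨((Sum.inl (⟨(d - 4) / 3, by omega⟩, 0, u + 1), j) : Idx k), 3, ?_⟩
          calc (blkOf ((Sum.inl (⟨(d - 4) / 3, by omega⟩, 0, u + 1), j) : Idx k)).slot 3
              = s((tf k ((3 * ((d - 4) / 3 + 1) + 3 + 3 * (j : ℕ) : ℕ) : ZMod (12 * k + 9)), u + 1 + 1),
                  (tf k ((6 * ((d - 4) / 3 + 1) + 4 + 3 * (j : ℕ) : ℕ) : ZMod (12 * k + 9)), u + 1)) := rfl
            _ = s((tf k P, u + 1 + 1), (tf k Q, u + 1)) := by rw [hc1, hc2]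
            _ = s((tf k P, u), (tf k Q, v)) := by rw [hv]; try (fin_cases u <;> rfl)
        · obtain ⟨j, hc1, hc2⟩ := leaf (3 * ((d - 4) / 3 + 1) + 4) (6 * ((d - 4) / 3 + 1) + 5) (d) P Q (by omega) (by omega) hQ
          refine ⟨((Sum.inl (⟨(d - 4) / 3, by omega⟩, 1, u + 1), j) : Idx k), 3, ?_⟩
          calc (blkOf ((Sum.inl (⟨(d - 4) / 3, by omega⟩, 1, u + 1), j) : Idx k)).slot 3
              = s((tf k ((3 * ((d - 4) / 3 + 1) + 4 + 3 * (j : ℕ) : ℕ) : ZMod (12 * k + 9)), u + 1 + 1),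
                  (tf k ((6 * ((d - 4) / 3 + 1) + 5 + 3 * (j : ℕ) : ℕ) : ZMod (12 * k + 9)), u + 1)) := rfl
            _ = s((tf k P, u + 1 + 1), (tf k Q, u + 1)) := by rw [hc1, hc2]
            _ = s((tf k P, u), (tf k Q, v)) := by rw [hv]; try (fin_cases u <;> rfl)
        · obtain ⟨j, hc1, hc2⟩ := leaf (3 * ((d - 4) / 3 + 1 + 1) + 5) (6 * ((d - 4) / 3 + 1 + 1) + 3) (d) P Q (by omega) (by omega) hQ
          refine ⟨((Sum.inl (⟨(d - 4) / 3 + 1, by omega⟩, 2, u), j) : Idx k), 4, ?_⟩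
          calc (blkOf ((Sum.inl (⟨(d - 4) / 3 + 1, by omega⟩, 2, u), j) : Idx k)).slot 4
              = s((tf k ((6 * ((d - 4) / 3 + 1 + 1) + 3 + 3 * (j : ℕ) : ℕ) : ZMod (12 * k + 9)), u + 1),
                  (tf k ((3 * ((d - 4) / 3 + 1 + 1) + 5 + 3 * (j : ℕ) : ℕ) : ZMod (12 * k + 9)), u)) := rfl
            _ = s((tf k Q, u + 1), (tf k P, u)) := by rw [hc1, hc2]
            _ = s((tf k P, u), (tf k Q, u + 1)) := Sym2.eq_swap
            _ = s((tf k P, u), (tf k Q, v)) := by rw [hv]; try (fin_cases u <;> rfl)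
  · rcases fin2_eq_or u v with hv | hv <;> rcases hr3 with hr | hr | hr
    · obtain ⟨j, hc1, hc2⟩ := leaf (6) (3 * ((d - 2) / 3 + 1) + 5) (d) P Q (by omega) (by omega) hQ
      refine ⟨((Sum.inl (⟨(d - 2) / 3, by omega⟩, 2, u + 1), j) : Idx k), 5, ?_⟩
      calc (blkOf ((Sum.inl (⟨(d - 2) / 3, by omega⟩, 2, u + 1), j) : Idx k)).slot 5
          = s((tf k ((3 * ((d - 2) / 3 + 1) + 5 + 3 * (j : ℕ) : ℕ) : ZMod (12 * k + 9)), u + 1 + 1),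
              (tf k ((6 + 3 * (j : ℕ) : ℕ) : ZMod (12 * k + 9)), 1 + (u + 1))) := rfl
        _ = s((tf k Q, u + 1 + 1), (tf k P, 1 + (u + 1))) := by rw [hc1, hc2]
        _ = s((tf k P, 1 + (u + 1)), (tf k Q, u + 1 + 1)) := Sym2.eq_swap
        _ = s((tf k P, u), (tf k Q, v)) := by rw [hv]; try (fin_cases u <;> rfl)
    · obtain ⟨j, hc1, hc2⟩ := leaf (4) (3 * ((d - 2) / 3 + 1) + 3) (d) P Q (by omega) (by omega) hQ
      refine ⟨((Sum.inl (⟨(d - 2) / 3, by omega⟩, 0, u), j) : Idx k), 2, ?_⟩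
      calc (blkOf ((Sum.inl (⟨(d - 2) / 3, by omega⟩, 0, u), j) : Idx k)).slot 2
          = s((tf k ((4 + 3 * (j : ℕ) : ℕ) : ZMod (12 * k + 9)), 1 + u + 1),
              (tf k ((3 * ((d - 2) / 3 + 1) + 3 + 3 * (j : ℕ) : ℕ) : ZMod (12 * k + 9)), u)) := rfl
        _ = s((tf k P, 1 + u + 1), (tf k Q, u)) := by rw [hc1, hc2]
        _ = s((tf k P, u), (tf k Q, v)) := by rw [hv]; try (fin_cases u <;> rfl)
    · obtain ⟨j, hc1, hc2⟩ := leaf (5) (3 * ((d - 2) / 3 + 1) + 4) (d) P Q (by omega) (by omega) hQ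
      refine ⟨((Sum.inl (⟨(d - 2) / 3, by omega⟩, 1, u), j) : Idx k), 2, ?_⟩
      calc (blkOf ((Sum.inl (⟨(d - 2) / 3, by omega⟩, 1, u), j) : Idx k)).slot 2
          = s((tf k ((5 + 3 * (j : ℕ) : ℕ) : ZMod (12 * k + 9)), 1 + u + 1),
              (tf k ((3 * ((d - 2) / 3 + 1) + 4 + 3 * (j : ℕ) : ℕ) : ZMod (12 * k + 9)), u)) := rfl
        _ = s((tf k P, 1 + u + 1), (tf k Q, u)) := by rw [hc1, hc2]
        _ = s((tf k P, u), (tf k Q, v)) := by rw [hv]; try (fin_cases u <;> rfl)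
    · obtain ⟨j, hc1, hc2⟩ := leaf (3 * ((d - 2) / 3 + 1) + 6) (6 * ((d - 2) / 3 + 1) + 5) (d) P Q (by omega) (by omega) hQ
      refine ⟨((Sum.inl (⟨(d - 2) / 3, by omega⟩, 1, u), j) : Idx k), 4, ?_⟩
      calc (blkOf ((Sum.inl (⟨(d - 2) / 3, by omega⟩, 1, u), j) : Idx k)).slot 4
          = s((tf k ((6 * ((d - 2) / 3 + 1) + 5 + 3 * (j : ℕ) : ℕ) : ZMod (12 * k + 9)), u + 1),
              (tf k ((3 * ((d - 2) / 3 + 1) + 6 + 3 * (j : ℕ) : ℕ) : ZMod (12 * k + 9)), u)) := rfl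
        _ = s((tf k Q, u + 1), (tf k P, u)) := by rw [hc1, hc2]
        _ = s((tf k P, u), (tf k Q, u + 1)) := Sym2.eq_swap
        _ = s((tf k P, u), (tf k Q, v)) := by rw [hv]; try (fin_cases u <;> rfl)
    · obtain ⟨j, hc1, hc2⟩ := leaf (3 * ((d - 2) / 3 + 1) + 4) (6 * ((d - 2) / 3 + 1) + 3) (d) P Q (by omega) (by omega) hQ
      refine ⟨((Sum.inl (⟨(d - 2) / 3, by omega⟩, 2, u + 1), j) : Idx k), 3, ?_⟩
      calc (blkOf ((Sum.inl (⟨(d - 2) / 3, by omega⟩, 2, u + 1), j) : Idx k)).slot 3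
          = s((tf k ((3 * ((d - 2) / 3 + 1) + 4 + 3 * (j : ℕ) : ℕ) : ZMod (12 * k + 9)), u + 1 + 1),
              (tf k ((6 * ((d - 2) / 3 + 1) + 3 + 3 * (j : ℕ) : ℕ) : ZMod (12 * k + 9)), u + 1)) := rfl
        _ = s((tf k P, u + 1 + 1), (tf k Q, u + 1)) := by rw [hc1, hc2]
        _ = s((tf k P, u), (tf k Q, v)) := by rw [hv]; try (fin_cases u <;> rfl)
    · obtain ⟨j, hc1, hc2⟩ := leaf (3 * ((d - 2) / 3 + 1) + 5) (6 * ((d - 2) / 3 + 1) + 4) (d) P Q (by omega) (by omega) hQ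
      refine ⟨((Sum.inl (⟨(d - 2) / 3, by omega⟩, 0, u), j) : Idx k), 4, ?_⟩
      calc (blkOf ((Sum.inl (⟨(d - 2) / 3, by omega⟩, 0, u), j) : Idx k)).slot 4
          = s((tf k ((6 * ((d - 2) / 3 + 1) + 4 + 3 * (j : ℕ) : ℕ) : ZMod (12 * k + 9)), u + 1),
              (tf k ((3 * ((d - 2) / 3 + 1) + 5 + 3 * (j : ℕ) : ℕ) : ZMod (12 * k + 9)), u)) := rfl
        _ = s((tf k Q, u + 1), (tf k P, u)) := by rw [hc1, hc2]
        _ = s((tf k P, u), (tf k Q, u + 1)) := Sym2.eq_swap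
        _ = s((tf k P, u), (tf k Q, v)) := by rw [hv]; try (fin_cases u <;> rfl)

end HOP62

namespace HOP62

variable {k : ℕ}

lemma isIEdge_of_snd_ne {n : ℕ} {x : Fin n} {a b : Fin 2} (h : a ≠ b) :
    IsIEdge s((x, a), (x, b)) := by
  refine ⟨(x, a), ?_⟩
  have hb : b = a + 1 := by
    rcases fin2_eq_or a b with h' | h'
    · exact absurd h'.symm h
    · exact h'
  subst hb
  rfl

lemma surj (e : Sym2 (HOPVertex (12 * k + 9))) (hd : ¬ e.IsDiag) (hI : ¬ IsIEdge e) :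
    ∃ ι : Idx k, ∃ sl : Fin 6, (blkOf ι).slot sl = e := by
  induction e using Sym2.inductionOn with
  | hf p q =>
    obtain ⟨P0, u⟩ := p
    obtain ⟨Q0, v⟩ := q
    have hP0 : tf k ((tf k).symm P0) = P0 := (tf k).apply_symm_apply P0
    have hQ0 : tf k ((tf k).symm Q0) = Q0 := (tf k).apply_symm_apply Q0
    set P := (tf k).symm P0 with hP
    set Q := (tf k).symm Q0 with hQd
    rw [← hP0, ← hQ0]
    rw [← hP0, ← hQ0] at hd hI
    by_cases hPQ : P = Q
    · exfalso
      rw [hPQ] at hd hI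
      by_cases huv : u = v
      · subst huv
        exact hd (by rw [Sym2.mk_isDiag_iff])
      · exact hI (isIEdge_of_snd_ne huv)
    · have hδ0 : Q - P ≠ 0 := by
        intro h
        apply hPQ
        have h2 : P + (Q - P) = Q := by ring
        rw [h, add_zero] at h2
        exact h2
      have hv1 : 1 ≤ (Q - P).val := by
        rcases Nat.eq_zero_or_pos (Q - P).val with h0 | h0
        · exact absurd ((ZMod.val_eq_zero (Q - P)).mp h0) hδ0
        · exact h0
      have hvlt : (Q - P).val < 12 * k + 9 := (Q - P).val_lt
      by_cases hsmall : (Q - P).val ≤ 6 * k + 4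
      · have hQeq : Q = P + (((Q - P).val : ℕ) : ZMod (12 * k + 9)) := by
          rw [ZMod.natCast_zmod_val]
          ring
        obtain ⟨ι, sl, hsl⟩ := cover P Q u v (Q - P).val hv1 hsmall hQeq
        exact ⟨ι, sl, hsl⟩
      · have hd1 : 1 ≤ 12 * k + 9 - (Q - P).val := by omega
        have hd2 : 12 * k + 9 - (Q - P).val ≤ 6 * k + 4 := by omega
        have hPeq : P = Q + (((12 * k + 9 - (Q - P).val : ℕ)) : ZMod (12 * k + 9)) := by
          rw [Nat.cast_sub (le_of_lt hvlt), ZMod.natCast_zmod_val, ZMod.natCast_self]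
          ring
        obtain ⟨ι, sl, hsl⟩ := cover Q P v u (12 * k + 9 - (Q - P).val) hd1 hd2 hPeq
        exact ⟨ι, sl, hsl.trans Sym2.eq_swap⟩

end HOP62

namespace HOP62

variable {k : ℕ}

lemma card_nonIE :
    Nat.card {e : Sym2 (HOPVertex (12 * k + 9)) // ¬ e.IsDiag ∧ ¬ IsIEdge e}
      = (12 * k + 9) * (24 * k + 16) := by
  classical
  have hD : Nat.card {e : Sym2 (HOPVertex (12 * k + 9)) // ¬ e.IsDiag}
      = (12 * k + 9) * (24 * k + 17) := by
    rw [Nat.card_eq_fintype_card, Sym2.card_subtype_not_diag]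
    have hc : Fintype.card (HOPVertex (12 * k + 9)) = 24 * k + 18 := by
      simp only [Fintype.card_prod, Fintype.card_fin]
      omega
    rw [hc, Nat.choose_two_right]
    have h1 : 24 * k + 18 - 1 = 24 * k + 17 := by omega
    rw [h1]
    have h2 : (24 * k + 18) * (24 * k + 17) = 2 * ((12 * k + 9) * (24 * k + 17)) := by ring
    rw [h2]
    omega
  have hIc : Nat.card {e : Sym2 (HOPVertex (12 * k + 9)) // ¬ e.IsDiag ∧ IsIEdge e}
      = 12 * k + 9 := by
    have hf : Function.Bijective (fun i : Fin (12 * k + 9) =>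
        (⟨s((i, 0), (i, 1)), by simp [Sym2.mk_isDiag_iff], ⟨(i, 0), rfl⟩⟩ :
          {e : Sym2 (HOPVertex (12 * k + 9)) // ¬ e.IsDiag ∧ IsIEdge e})) := by
      constructor
      · intro i i' h
        have h2 : s(((i : Fin (12 * k + 9)), (0 : Fin 2)), (i, 1)) = s((i', 0), (i', 1)) :=
          congrArg Subtype.val h
        rw [Sym2.eq_iff] at h2
        rcases h2 with ⟨h3, _⟩ | ⟨h3, _⟩
        · exact (Prod.ext_iff.mp h3).1
        · exfalso
          have h4 : (0 : Fin 2) = 1 := congrArg Prod.snd h3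
          exact absurd h4 (by decide)
      · rintro ⟨e, hD2, v, rfl⟩
        obtain ⟨x, p⟩ := v
        fin_cases p
        · exact ⟨x, rfl⟩
        · exact ⟨x, Subtype.ext Sym2.eq_swap⟩
    have h3 := Nat.card_eq_of_bijective _ hf
    rw [Nat.card_eq_fintype_card, Fintype.card_fin] at h3
    exact h3.symm
  have hsplit : Nat.card {e : Sym2 (HOPVertex (12 * k + 9)) // ¬ e.IsDiag}
      = Nat.card {e : Sym2 (HOPVertex (12 * k + 9)) // ¬ e.IsDiag ∧ IsIEdge e}
        + Nat.card {e : Sym2 (HOPVertex (12 * k + 9)) // ¬ e.IsDiag ∧ ¬ IsIEdge e} := by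
    have E1 := Equiv.sumCompl (fun x : {e : Sym2 (HOPVertex (12 * k + 9)) // ¬ e.IsDiag} =>
      IsIEdge x.val)
    have E2 := Equiv.subtypeSubtypeEquivSubtypeInter
      (fun e : Sym2 (HOPVertex (12 * k + 9)) => ¬ e.IsDiag) (fun e => IsIEdge e)
    have E3 := Equiv.subtypeSubtypeEquivSubtypeInter
      (fun e : Sym2 (HOPVertex (12 * k + 9)) => ¬ e.IsDiag) (fun e => ¬ IsIEdge e)
    rw [← Nat.card_congr E1, Nat.card_sum, Nat.card_congr E2, Nat.card_congr E3]
  have hr : (12 * k + 9) * (24 * k + 17) = (12 * k + 9) + (12 * k + 9) * (24 * k + 16) := by ring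
  omega

end HOP62

namespace HOP62

variable {k : ℕ}

noncomputable def Phi (k : ℕ) :
    Idx k × Fin 6 → {e : Sym2 (HOPVertex (12 * k + 9)) // ¬ e.IsDiag ∧ ¬ IsIEdge e} :=
  fun x => ⟨(blkOf x.1).slot x.2, (blkOf x.1).slot_not_diag x.2, (blkOf x.1).slot_not_I x.2⟩

lemma Phi_bij : Function.Bijective (Phi k) := by
  have hsurj : Function.Surjective (Phi k) := by
    rintro ⟨e, hD, hI⟩
    obtain ⟨ι, sl, h⟩ := surj e hD hI
    exact ⟨(ι, sl), Subtype.ext h⟩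
  rw [Nat.bijective_iff_surjective_and_card]
  refine ⟨hsurj, ?_⟩
  rw [card_nonIE, Nat.card_eq_fintype_card, Fintype.card_prod]
  simp only [Fintype.card_prod, Fintype.card_sum, Fintype.card_fin, Idx]
  ring_nf

lemma hopMain (k : ℕ) : HOPSolution (12 * k + 9) (12 * k + 3) 2 ![2, 4] := by
  classical
  refine ⟨(12 * k + 8) * (4 * k + 3), ?_, ?_⟩
  · have hsum : (∑ i, (![2, 4] : Fin 2 → ℕ) i) = 6 := by decide
    rw [hsum]
    have h9 : 12 * k + 9 - 1 = 12 * k + 8 := by omega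
    rw [h9]
    ring
  · have hc : Fintype.card (Idx k) = (12 * k + 8) * (4 * k + 3) := by
      simp only [Fintype.card_prod, Fintype.card_sum, Fintype.card_fin, Idx]
      ring_nf
    let eqv : Fin ((12 * k + 8) * (4 * k + 3)) ≃ Idx k := (Fintype.equivFinOfCardEq hc).symm
    refine ⟨fun K => (blkOf (eqv K)).factor, ?_⟩
    intro e hD hI
    obtain ⟨ι, sl, h1⟩ := surj e hD hI
    refine ⟨eqv.symm ι, ?_, ?_⟩
    · show e ∈ (blkOf (eqv (eqv.symm ι))).factor.edges
      rw [Equiv.apply_symm_apply, ← h1]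
      exact (blkOf ι).slot_mem sl
    · intro K' hK'
      obtain ⟨sl', hsl'⟩ := (blkOf (eqv K')).edges_sub hK' hI
      have h2 : Phi k (eqv K', sl') = Phi k (ι, sl) :=
        Subtype.ext (hsl'.symm.trans h1.symm)
      have h3 : ((eqv K', sl') : Idx k × Fin 6) = (ι, sl) := Phi_bij.injective h2
      have h4 : eqv K' = ι := congrArg Prod.fst h3
      have h5 := congrArg eqv.symm h4
      rwa [Equiv.symm_apply_apply] at h5

end HOP62


/-- Lemma 6.2: for `k ≥ 0`, `n = 12k + 9` and `s = n - 6`,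
`HOP(2^⟨s⟩, 4, 8)` has a solution. -/
theorem hop_C2_C4 (k n s : ℕ) (hn : n = 12 * k + 9) (hs : s = n - 6) :
    HOPSolution n s 2 ![2, 4] := by
  subst hn
  subst hs
  rw [show 12 * k + 9 - 6 = 12 * k + 3 from by omega]
  exact HOP62.hopMain k
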